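/- (Lemma 2, approximate gradient error bound) Let λ ∈ ℝᵐ, η ≥ 0, let x⁺ ∈ ℝⁿ be an η-approximate solution of the AL subproblem at λ, and let x̄ ∈ ℝⁿ be a 0-approximate solution of the AL subproblem at λ (i.e., an exact solution: for every x, ⟨∇f(x̄) + Aᵀ(λ + β(Ax̄ − b)), x̄ − x⟩ + g(x̄) − g(x) ≤ 0). Then ‖(Ax̄ − b) − (Ax⁺ − b)‖² ≤ η/β. -/

import Mathlib

open RealInnerProductSpace

section aux

variable {E : Type*} [NormedAddCommGroup E] [InnerProductSpace ℝ E] [CompleteSpace E]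

/-- First-order condition for a convex differentiable function. -/
lemma aux_grad_le {f : E → ℝ} (hf : ConvexOn ℝ Set.univ f) {x : E} {gx : E}
    (hx : HasGradientAt f gx x) (y : E) : ⟪gx, y - x⟫ ≤ f y - f x := by
  set φ : ℝ → ℝ := fun t => f (AffineMap.lineMap x y t) with hφ
  have hconv : ConvexOn ℝ Set.univ φ := by
    have := hf.comp_affineMap (AffineMap.lineMap x y : ℝ →ᵃ[ℝ] E)
    exact this
  have hline : ∀ t : ℝ, (AffineMap.lineMap x y : ℝ →ᵃ[ℝ] E) t = x + t • (y - x) := by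
    intro t; simp [AffineMap.lineMap_apply]; try module
  have hderiv : HasDerivAt φ ⟪gx, y - x⟫ 0 := by
    have hmap : HasDerivAt (fun t : ℝ => (AffineMap.lineMap x y : ℝ →ᵃ[ℝ] E) t) (y - x) 0 := by
      simp only [hline]
      have h1 : HasDerivAt (fun t : ℝ => t • (y - x)) ((1:ℝ) • (y - x)) 0 :=
        (hasDerivAt_id 0).smul_const (y - x)
      simpa using h1.const_add x
    have hF : HasFDerivAt f (InnerProductSpace.toDual ℝ E gx)
        ((AffineMap.lineMap x y : ℝ →ᵃ[ℝ] E) 0) := by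
      simpa using hx.hasFDerivAt
    have := hF.comp_hasDerivAt (x := (0:ℝ)) hmap
    simp only [InnerProductSpace.toDual_apply_apply] at this
    exact this
  have h01 : (0:ℝ) < 1 := one_pos
  have hd : deriv φ 0 ≤ slope φ 0 1 :=
    hconv.deriv_le_slope (Set.mem_univ 0) (Set.mem_univ 1) h01 hderiv.differentiableAt
  rw [hderiv.deriv] at hd
  have hs : slope φ 0 1 = φ 1 - φ 0 := by simp [slope_def_field]; try ring
  rw [hs] at hd
  have h0 : φ 0 = f x := by simp [φ]
  have h1 : φ 1 = f y := by simp [φ]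
  rw [h0, h1] at hd
  exact hd

/-- Gradient monotonicity. -/
lemma aux_grad_mono {f : E → ℝ} (hf : ConvexOn ℝ Set.univ f) {x y : E} {gx gy : E}
    (hx : HasGradientAt f gx x) (hy : HasGradientAt f gy y) :
    0 ≤ ⟪gx - gy, x - y⟫ := by
  have h1 := aux_grad_le hf hx y
  have h2 := aux_grad_le hf hy x
  have : ⟪gx, y - x⟫ + ⟪gy, x - y⟫ ≤ 0 := by linarith
  have heq : ⟪gx - gy, x - y⟫ = -(⟪gx, y - x⟫ + ⟪gy, x - y⟫) := by
    rw [inner_sub_left]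
    rw [show (y - x) = -(x - y) by abel, inner_neg_right]
    ring
  rw [heq]; linarith

end aux

/-- **Lemma 2 (approximate gradient error bound).**
Let `x⁺` be an `η`-approximate solution and `x̄` an exact solution of the AL
subproblem at `λ`. Then `‖(Ax̄ − b) − (Ax⁺ − b)‖² ≤ η/β`. -/
theorem ial_gradient_error_bound
    {n m : ℕ}
    (A : EuclideanSpace ℝ (Fin n) →L[ℝ] EuclideanSpace ℝ (Fin m))
    (b : EuclideanSpace ℝ (Fin m))
    (f g : EuclideanSpace ℝ (Fin n) → ℝ)
    (f' : EuclideanSpace ℝ (Fin n) → EuclideanSpace ℝ (Fin n))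
    (hf : ConvexOn ℝ Set.univ f)
    (hf' : ∀ x, HasGradientAt f (f' x) x)
    (hg : ConvexOn ℝ Set.univ g)
    (β : ℝ) (hβ : 0 < β)
    (lam : EuclideanSpace ℝ (Fin m))
    (η : ℝ) (hη : 0 ≤ η)
    (xp : EuclideanSpace ℝ (Fin n))
    (happrox : ∀ y,
        ⟪f' xp + A.adjoint (lam + β • (A xp - b)), xp - y⟫ + g xp - g y ≤ η)
    (xbar : EuclideanSpace ℝ (Fin n))
    (hexact : ∀ y,
        ⟪f' xbar + A.adjoint (lam + β • (A xbar - b)), xbar - y⟫ + g xbar - g y ≤ 0) :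
    ‖(A xbar - b) - (A xp - b)‖ ^ 2 ≤ η / β := by
  have h1 := happrox xbar
  have h2 := hexact xp
  have hmono := aux_grad_mono hf (hf' xp) (hf' xbar)
  set u := xp - xbar with hu
  have hadj : ∀ (v : EuclideanSpace ℝ (Fin m)) (w : EuclideanSpace ℝ (Fin n)),
      ⟪A.adjoint v, w⟫ = ⟪v, A w⟫ := fun v w => ContinuousLinearMap.adjoint_inner_left A w v
  have e1 : ⟪f' xp + A.adjoint (lam + β • (A xp - b)), xp - xbar⟫
      = ⟪f' xp, u⟫ + ⟪lam + β • (A xp - b), A u⟫ := by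
    rw [inner_add_left, hadj]
  have e2 : ⟪f' xbar + A.adjoint (lam + β • (A xbar - b)), xbar - xp⟫
      = -⟪f' xbar, u⟫ - ⟪lam + β • (A xbar - b), A u⟫ := by
    rw [inner_add_left, hadj, show xbar - xp = -u from by rw [hu, neg_sub], inner_neg_right,
      map_neg, inner_neg_right]
    ring
  rw [e1] at h1; rw [e2] at h2
  have i1 : ⟪lam + β • (A xp - b), A u⟫ = ⟪lam, A u⟫ + β * ⟪A xp - b, A u⟫ := by
    rw [inner_add_left, real_inner_smul_left]
  have i2 : ⟪lam + β • (A xbar - b), A u⟫ = ⟪lam, A u⟫ + β * ⟪A xbar - b, A u⟫ := by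
    rw [inner_add_left, real_inner_smul_left]
  have i3 : ⟪f' xp - f' xbar, u⟫ = ⟪f' xp, u⟫ - ⟪f' xbar, u⟫ := inner_sub_left _ _ _
  rw [i3] at hmono
  rw [i1] at h1; rw [i2] at h2
  have hkey : β * ⟪A xp - b, A u⟫ - β * ⟪A xbar - b, A u⟫ ≤ η := by linarith
  have hAu : A u = (A xp - b) - (A xbar - b) := by
    simp only [hu, map_sub]; abel
  rw [hAu] at hkey
  have hfin : β * ⟪(A xp - b) - (A xbar - b), (A xp - b) - (A xbar - b)⟫ ≤ η := by
    rw [inner_sub_left, mul_sub]; exact hkey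
  have hnorm : ‖(A xbar - b) - (A xp - b)‖ ^ 2
      = ⟪(A xp - b) - (A xbar - b), (A xp - b) - (A xbar - b)⟫ := by
    rw [real_inner_self_eq_norm_sq, norm_sub_rev]
  rw [hnorm, le_div_iff₀ hβ, mul_comm]
  exact hfin
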